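/- For i = 1, 2, 3 let T_i be the Crabb–Davie 8×8 complex matrix. Then the matrices T_1, T_2, T_3 pairwise commute, and for each i, T_i T_i* = diag(0, δ_{i1}, δ_{i2}, δ_{i3}, 1, 1, 1, 1) (the diagonal matrix with those diagonal entries); in particular each T_i is a partial isometry and a contraction. -/
import Mathlib



open Matrix
/-- Kronecker delta on `Fin 3`. -/
def kd (i j : Fin 3) : ℂ := if i = j then 1 else 0

/-- The Crabb–Davie `8×8` matrices (rows and columns indexed `0,…,7`
corresponding to `1,…,8` in the paper). -/
def cdMatrix (i : Fin 3) : Matrix (Fin 8) (Fin 8) ℂ :=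
  !![0,      0,       0,       0,       0,      0,      0,      0;
     kd i 0, 0,       0,       0,       0,      0,      0,      0;
     kd i 1, 0,       0,       0,       0,      0,      0,      0;
     kd i 2, 0,       0,       0,       0,      0,      0,      0;
     0,     -kd i 0,  kd i 2,  kd i 1,  0,      0,      0,      0;
     0,      kd i 2, -kd i 1,  kd i 0,  0,      0,      0,      0;
     0,      kd i 1,  kd i 0, -kd i 2,  0,      0,      0,      0;
     0,      0,       0,       0,       kd i 0, kd i 1, kd i 2, 0]

@[simp] lemma cdAux_cons_val_five {α : Type*} {m : ℕ} (x : α) (u : Fin (m+5) → α) :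
    vecCons x u 5 = vecHead (vecTail (vecTail (vecTail (vecTail u)))) := rfl
@[simp] lemma cdAux_cons_val_six {α : Type*} {m : ℕ} (x : α) (u : Fin (m+6) → α) :
    vecCons x u 6 = vecHead (vecTail (vecTail (vecTail (vecTail (vecTail u))))) := rfl
@[simp] lemma cdAux_cons_val_seven {α : Type*} {m : ℕ} (x : α) (u : Fin (m+7) → α) :
    vecCons x u 7 = vecHead (vecTail (vecTail (vecTail (vecTail (vecTail (vecTail u)))))) := rfl

/-- Integer version of the Kronecker delta. -/
def kdZ (i j : Fin 3) : ℤ := if i = j then 1 else 0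

/-- Integer version of the Crabb–Davie matrices. -/
def NZ (i : Fin 3) : Matrix (Fin 8) (Fin 8) ℤ :=
  !![0,      0,       0,       0,       0,      0,      0,      0;
     kdZ i 0, 0,       0,       0,       0,      0,      0,      0;
     kdZ i 1, 0,       0,       0,       0,      0,      0,      0;
     kdZ i 2, 0,       0,       0,       0,      0,      0,      0;
     0,     -kdZ i 0,  kdZ i 2,  kdZ i 1,  0,      0,      0,      0;
     0,      kdZ i 2, -kdZ i 1,  kdZ i 0,  0,      0,      0,      0;
     0,      kdZ i 1,  kdZ i 0, -kdZ i 2,  0,      0,      0,      0;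
     0,      0,       0,       0,       kdZ i 0, kdZ i 1, kdZ i 2, 0]

set_option maxHeartbeats 1000000 in
lemma cd_eq (i : Fin 3) : cdMatrix i = (NZ i).map (Int.cast : ℤ → ℂ) := by
  ext a b
  fin_cases a <;> fin_cases b <;>
    simp [cdMatrix, NZ, kd, kdZ, Matrix.map_apply, Matrix.vecHead, Matrix.vecTail,
      apply_ite (Int.cast : ℤ → ℂ)]

lemma cdStar_eq (i : Fin 3) : (cdMatrix i)ᴴ = ((NZ i)ᵀ).map (Int.cast : ℤ → ℂ) := by
  rw [cd_eq]
  ext a b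
  simp [Matrix.conjTranspose_apply, Matrix.map_apply]

lemma cd_mul (A B : Matrix (Fin 8) (Fin 8) ℤ) :
    A.map (Int.cast : ℤ → ℂ) * B.map (Int.cast : ℤ → ℂ) = (A * B).map (Int.cast : ℤ → ℂ) :=
  (Matrix.map_mul (f := Int.castRingHom ℂ)).symm

lemma NZ_comm : ∀ i j : Fin 3, NZ i * NZ j = NZ j * NZ i := by
  intro i j; fin_cases i <;> fin_cases j <;> decide

lemma NZ_proj : ∀ i : Fin 3, NZ i * (NZ i)ᵀ * NZ i = NZ i := by
  intro i; fin_cases i <;> decide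

lemma NZ_diag : ∀ i : Fin 3,
    NZ i * (NZ i)ᵀ = Matrix.diagonal ![0, kdZ i 0, kdZ i 1, kdZ i 2, 1, 1, 1, 1] := by
  intro i
  fin_cases i <;> decide

lemma cd_partial (i : Fin 3) : cdMatrix i * (cdMatrix i)ᴴ * cdMatrix i = cdMatrix i := by
  rw [cdStar_eq, cd_eq, cd_mul, cd_mul, NZ_proj]

/-- The Crabb–Davie matrices pairwise commute, satisfy
`T_i T_i* = diag(0, δ_{i1}, δ_{i2}, δ_{i3}, 1, 1, 1, 1)`; in particular each is a
partial isometry and a contraction. -/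
theorem statement6 :
    (∀ i j : Fin 3, cdMatrix i * cdMatrix j = cdMatrix j * cdMatrix i) ∧
    (∀ i : Fin 3, cdMatrix i * (cdMatrix i)ᴴ =
      Matrix.diagonal ![0, kd i 0, kd i 1, kd i 2, 1, 1, 1, 1]) ∧
    (∀ i : Fin 3, cdMatrix i * (cdMatrix i)ᴴ * cdMatrix i = cdMatrix i) ∧
    (∀ i : Fin 3, ‖Matrix.toEuclideanCLM (𝕜 := ℂ) (cdMatrix i)‖ ≤ 1) := by
  refine ⟨?_, ?_, cd_partial, ?_⟩
  · intro i j
    rw [cd_eq, cd_eq, cd_mul, cd_mul, NZ_comm]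
  · intro i
    rw [cdStar_eq, cd_eq, cd_mul, NZ_diag]
    ext a b
    rcases eq_or_ne a b with rfl | hab
    · fin_cases a <;>
        simp [Matrix.map_apply, Matrix.diagonal_apply_eq, kd, kdZ,
          Matrix.vecHead, Matrix.vecTail, apply_ite (Int.cast : ℤ → ℂ)]
    · simp [Matrix.map_apply, Matrix.diagonal_apply_ne _ hab]
  · intro i
    set A := Matrix.toEuclideanCLM (𝕜 := ℂ) (cdMatrix i) with hA
    have hmul : A * star A * A = A := by
      rw [hA, ← map_star, ← _root_.map_mul, ← _root_.map_mul]
      rw [Matrix.star_eq_conjTranspose, cd_partial]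
    have hstar : star (A * star A) = A * star A := by
      rw [StarMul.star_mul, star_star]
    have hidem : (A * star A) * (A * star A) = A * star A := by
      calc (A * star A) * (A * star A) = (A * star A * A) * star A := by rw [← mul_assoc]
        _ = A * star A := by rw [hmul]
    have hpnorm : ‖A * star A‖ ≤ 1 := by
      have h1 : ‖A * star A‖ * ‖A * star A‖ = ‖A * star A‖ := by
        conv_lhs => rw [← CStarRing.norm_star_mul_self (x := A * star A)]
        rw [hstar, hidem]
      nlinarith [norm_nonneg (A * star A)]
    have h2 : ‖A‖ * ‖A‖ ≤ 1 := by
      rw [← CStarRing.norm_self_mul_star (x := A)]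
      exact hpnorm
    nlinarith [norm_nonneg A]
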